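/- For the MNL choice probabilities p_i(w) = exp(x_i^⊤ w)/(v_0 + ∑_{j∈S} exp(x_j^⊤ w)) with v_0 > 0, the matrix G(w) = ∑_{i∈S} p_i(w) x_i x_i^⊤ − ∑_{i∈S} ∑_{j∈S} p_i(w) p_j(w) x_i x_j^⊤ is positive semi-definite, and moreover G(w) ⪰ ∑_{i∈S} p_i(w) p_0(w) x_i x_i^⊤, where p_0(w) = v_0/(v_0 + ∑_{j∈S} exp(x_j^⊤ w)). -/

import Mathlib

open Matrix

private lemma quad_vecMulVec {d : ℕ} (u v z : Fin d → ℝ) :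
    z ⬝ᵥ (vecMulVec u v *ᵥ z) = (u ⬝ᵥ z) * (v ⬝ᵥ z) := by
  simp [dotProduct, mulVec, vecMulVec, Finset.mul_sum, Finset.sum_mul]
  rw [Finset.sum_comm]
  congr 1; ext i; congr 1; ext j; ring

private lemma transpose_vecMulVec' {d : ℕ} (u v : Fin d → ℝ) :
    (vecMulVec u v)ᵀ = vecMulVec v u := by
  ext i j; simp [vecMulVec, mul_comm]

private lemma dotProduct_sum' {d : ℕ} {ι : Type*} (s : Finset ι) (z : Fin d → ℝ)
    (f : ι → Fin d → ℝ) : z ⬝ᵥ (∑ i ∈ s, f i) = ∑ i ∈ s, z ⬝ᵥ f i := by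
  induction s using Finset.cons_induction with
  | empty => simp
  | cons a s h ih => simp [Finset.sum_cons, dotProduct_add, ih]

private lemma conjT_vecMulVec {d : ℕ} (u v : Fin d → ℝ) :
    (vecMulVec u v)ᴴ = vecMulVec v u := by
  ext i j; simp [conjTranspose_apply, vecMulVec, mul_comm]

private lemma sum_mulVec' {d : ℕ} {ι : Type*} (s : Finset ι)
    (M : ι → Matrix (Fin d) (Fin d) ℝ) (z : Fin d → ℝ) :
    (∑ i ∈ s, M i) *ᵥ z = ∑ i ∈ s, M i *ᵥ z :=
  map_sum (Matrix.mulVec.addMonoidHomLeft z) M s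

theorem stmt_4 {d : ℕ} {ι : Type*} (S : Finset ι) (v0 : ℝ) (hv0 : 0 < v0)
    (x : ι → Fin d → ℝ) (w : Fin d → ℝ)
    (p : ι → ℝ) (p0 : ℝ)
    (hp : ∀ i, p i = Real.exp (x i ⬝ᵥ w) / (v0 + ∑ j ∈ S, Real.exp (x j ⬝ᵥ w)))
    (hp0 : p0 = v0 / (v0 + ∑ j ∈ S, Real.exp (x j ⬝ᵥ w)))
    (G : Matrix (Fin d) (Fin d) ℝ)
    (hG : G = ∑ i ∈ S, p i • vecMulVec (x i) (x i) -
      ∑ i ∈ S, ∑ j ∈ S, (p i * p j) • vecMulVec (x i) (x j)) :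
    G.PosSemidef ∧ (G - ∑ i ∈ S, (p i * p0) • vecMulVec (x i) (x i)).PosSemidef := by
  have hD : 0 < v0 + ∑ j ∈ S, Real.exp (x j ⬝ᵥ w) := by positivity
  have hpnn : ∀ i, 0 ≤ p i := fun i => by rw [hp]; positivity
  have hp0nn : 0 ≤ p0 := by rw [hp0]; positivity
  have hsum : ∑ i ∈ S, p i = 1 - p0 := by
    simp only [hp, hp0, ← Finset.sum_div]
    field_simp
    ring
  -- quadratic form of G
  have hqG : ∀ z : Fin d → ℝ, z ⬝ᵥ (G *ᵥ z) =
      (∑ i ∈ S, p i * (x i ⬝ᵥ z) ^ 2) - (∑ i ∈ S, p i * (x i ⬝ᵥ z)) ^ 2 := by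
    intro z
    rw [hG, sub_mulVec, dotProduct_sub]
    congr 1
    · rw [sum_mulVec', dotProduct_sum']
      refine Finset.sum_congr rfl fun i _ => ?_
      rw [smul_mulVec, dotProduct_smul, quad_vecMulVec]
      simp [sq, smul_eq_mul]
    · rw [sum_mulVec', dotProduct_sum']
      rw [sq, Finset.sum_mul_sum]
      refine Finset.sum_congr rfl fun i _ => ?_
      rw [sum_mulVec', dotProduct_sum']
      refine Finset.sum_congr rfl fun j _ => ?_
      rw [smul_mulVec, dotProduct_smul, quad_vecMulVec]
      simp [smul_eq_mul]; ring
  -- quadratic form of the subtracted matrix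
  have hqM : ∀ z : Fin d → ℝ,
      z ⬝ᵥ ((∑ i ∈ S, (p i * p0) • vecMulVec (x i) (x i)) *ᵥ z) =
      ∑ i ∈ S, p i * p0 * (x i ⬝ᵥ z) ^ 2 := by
    intro z
    rw [sum_mulVec', dotProduct_sum']
    refine Finset.sum_congr rfl fun i _ => ?_
    rw [smul_mulVec, dotProduct_smul, quad_vecMulVec]
    simp [sq, smul_eq_mul]
  -- Cauchy-Schwarz: (∑ p a)² ≤ (∑ p) (∑ p a²)
  have hCS : ∀ z : Fin d → ℝ, (∑ i ∈ S, p i * (x i ⬝ᵥ z)) ^ 2 ≤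
      (∑ i ∈ S, p i) * ∑ i ∈ S, p i * (x i ⬝ᵥ z) ^ 2 := by
    intro z
    have := Finset.sum_mul_sq_le_sq_mul_sq S (fun i => Real.sqrt (p i))
      (fun i => Real.sqrt (p i) * (x i ⬝ᵥ z))
    calc (∑ i ∈ S, p i * (x i ⬝ᵥ z)) ^ 2
        = (∑ i ∈ S, Real.sqrt (p i) * (Real.sqrt (p i) * (x i ⬝ᵥ z))) ^ 2 := by
          congr 1; refine Finset.sum_congr rfl fun i _ => ?_
          rw [← mul_assoc, Real.mul_self_sqrt (hpnn i)]
      _ ≤ (∑ i ∈ S, Real.sqrt (p i) ^ 2) * ∑ i ∈ S, (Real.sqrt (p i) * (x i ⬝ᵥ z)) ^ 2 := this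
      _ = (∑ i ∈ S, p i) * ∑ i ∈ S, p i * (x i ⬝ᵥ z) ^ 2 := by
          congr 1
          · exact Finset.sum_congr rfl fun i _ => Real.sq_sqrt (hpnn i)
          · refine Finset.sum_congr rfl fun i _ => ?_
            rw [mul_pow, Real.sq_sqrt (hpnn i)]
  -- nonnegativity of the quadratic form of G - M
  have hkey : ∀ z : Fin d → ℝ,
      0 ≤ z ⬝ᵥ ((G - ∑ i ∈ S, (p i * p0) • vecMulVec (x i) (x i)) *ᵥ z) := by
    intro z
    rw [sub_mulVec, dotProduct_sub, hqG, hqM]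
    have h1 : ∑ i ∈ S, p i * p0 * (x i ⬝ᵥ z) ^ 2
        = p0 * ∑ i ∈ S, p i * (x i ⬝ᵥ z) ^ 2 := by
      rw [Finset.mul_sum]; exact Finset.sum_congr rfl fun i _ => by ring
    have h2 := hCS z
    rw [hsum] at h2
    nlinarith [h2]
  -- Hermitian facts
  have hHermG : G.IsHermitian := by
    rw [hG]
    unfold Matrix.IsHermitian
    rw [conjTranspose_sub]
    congr 1
    · rw [conjTranspose_sum]
      refine Finset.sum_congr rfl fun i _ => ?_
      rw [conjTranspose_smul, conjT_vecMulVec]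
      simp
    · rw [conjTranspose_sum, Finset.sum_comm]
      refine Finset.sum_congr rfl fun i _ => ?_
      rw [conjTranspose_sum]
      refine Finset.sum_congr rfl fun j _ => ?_
      rw [conjTranspose_smul, conjT_vecMulVec]
      simp [mul_comm]
  have hHermM : (∑ i ∈ S, (p i * p0) • vecMulVec (x i) (x i)).IsHermitian := by
    unfold Matrix.IsHermitian
    rw [conjTranspose_sum]
    refine Finset.sum_congr rfl fun i _ => ?_
    rw [conjTranspose_smul, conjT_vecMulVec]
    simp
  have hM : Matrix.PosSemidef (∑ i ∈ S, (p i * p0) • vecMulVec (x i) (x i)) := by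
    refine PosSemidef.of_dotProduct_mulVec_nonneg hHermM fun z => ?_
    show (0:ℝ) ≤ star z ⬝ᵥ _
    have : star z = z := rfl
    rw [this, hqM]
    exact Finset.sum_nonneg fun i _ =>
      mul_nonneg (mul_nonneg (hpnn i) hp0nn) (sq_nonneg _)
  have hGM : (G - ∑ i ∈ S, (p i * p0) • vecMulVec (x i) (x i)).PosSemidef := by
    refine PosSemidef.of_dotProduct_mulVec_nonneg (hHermG.sub hHermM) fun z => ?_
    show (0:ℝ) ≤ star z ⬝ᵥ _
    have : star z = z := rfl
    rw [this]
    exact hkey z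
  refine ⟨?_, hGM⟩
  have : G = (G - ∑ i ∈ S, (p i * p0) • vecMulVec (x i) (x i))
      + ∑ i ∈ S, (p i * p0) • vecMulVec (x i) (x i) := by ring_nf; abel
  rw [this]
  exact hGM.add hM
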